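/- For integers 0 ≤ k ≤ h, let f(h,k) be the maximum number of leaves of a rooted binary tree of height at most h no restriction of which is a balanced rooted binary tree of height more than k. Then f(h,k) = 2^k when h = k or k = 0, and f(h,k) = f(h−1,k) + f(h−1,k−1) whenever 0 < k < h. -/

import Mathlib

/-!
# Rooted binary phylogenetic trees

`RTree L` is the type of rooted binary trees with leaves labelled by elements of `L`:
every internal vertex has exactly two children (a left child and a right child), and
a tree with one leaf is a single vertex.
-/

inductive RTree (L : Type) : Type
  | leaf : L → RTree L
  | node : RTree L → RTree L → RTree L

namespace RTree

variable {L : Type}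

/-- The list of leaf labels of a rooted binary tree, read from left to right. -/
def leafList : RTree L → List L
  | leaf b => [b]
  | node l r => leafList l ++ leafList r

/-- The number of leaves of a rooted binary tree. -/
def numLeaves (T : RTree L) : ℕ := T.leafList.length

/-- The set of leaf labels of a rooted binary tree. -/
def leafSet (T : RTree L) : Set L := {b | b ∈ T.leafList}

/-- The height of a rooted binary tree: the maximum distance from the root to a leaf. -/
def height : RTree L → ℕ
  | leaf _ => 0
  | node l r => max (height l) (height r) + 1

/-- A rooted binary tree is balanced if all of its leaves are at the same distance
from the root. -/
def IsBalanced : RTree L → Prop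
  | leaf _ => True
  | node l r => IsBalanced l ∧ IsBalanced r ∧ height l = height r

/-- A rooted binary tree is phylogenetic if its leaves are labelled bijectively by a
finite set, i.e. all leaf labels are distinct. -/
def IsPhylo (T : RTree L) : Prop := T.leafList.Nodup

/-- `Embeds S T` is the subtree relation `S ⪯ T`: there is an injective map `f` from the
vertices of `S` to the vertices of `T` such that `f x = x` for every leaf `x` of `S`
(leaves being identified across trees by their labels) and
`f (x ∧ y) = f x ∧ f y` for all vertices `x`, `y` of `S`, where `∧` denotes the most
recent common ancestor.  Equivalently (for trees with distinct leaf labels), `S` is the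
restriction of `T` to the leaf set of `S`, up to rooted isomorphism; this structural
characterization is taken as the definition. -/
inductive Embeds : RTree L → RTree L → Prop
  | leaf (b : L) : Embeds (RTree.leaf b) (RTree.leaf b)
  | left {S l r : RTree L} : Embeds S l → Embeds S (RTree.node l r)
  | right {S l r : RTree L} : Embeds S r → Embeds S (RTree.node l r)
  | pair {s₁ s₂ l r : RTree L} :
      Embeds s₁ l → Embeds s₂ r → Embeds (RTree.node s₁ s₂) (RTree.node l r)
  | pair_swap {s₁ s₂ l r : RTree L} :
      Embeds s₁ r → Embeds s₂ l → Embeds (RTree.node s₁ s₂) (RTree.node l r)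

/-- `mast T₁ T₂` is the maximum cardinality of a subset `X ⊆ L(T₁) ∩ L(T₂)` such that
the restrictions `T₁|X` and `T₂|X` are isomorphic; equivalently, the maximum number of
leaves of a rooted binary phylogenetic tree `S` with `S ⪯ T₁` and `S ⪯ T₂`. -/
noncomputable def mast (T₁ T₂ : RTree L) : ℕ :=
  sSup {n | ∃ S : RTree L, S.IsPhylo ∧ Embeds S T₁ ∧ Embeds S T₂ ∧ S.numLeaves = n}

end RTree

/-- `fExt h k` is the maximum number of leaves of a rooted binary (phylogenetic) tree of
height at most `h` no restriction of which is a balanced rooted binary tree of height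
more than `k`.  (A restriction of `T` is any rooted binary tree `S` with `S ⪯ T`.) -/
noncomputable def fExt (h k : ℕ) : ℕ :=
  sSup {n | ∃ T : RTree ℕ, T.IsPhylo ∧ T.height ≤ h ∧
    (∀ S : RTree ℕ, RTree.Embeds S T → S.IsBalanced → S.height ≤ k) ∧ T.numLeaves = n}

namespace RTree
variable {L : Type}

theorem Embeds.height_le {S T : RTree L} (e : Embeds S T) : S.height ≤ T.height := by
  induction e with
  | leaf => exact le_rfl
  | left _ ih => simp only [height]; omega
  | right _ ih => simp only [height]; omega
  | pair _ _ ih1 ih2 => simp only [height]; omega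
  | pair_swap _ _ ih1 ih2 => simp only [height]; omega

theorem numLeaves_le_two_pow (T : RTree L) : T.numLeaves ≤ 2 ^ T.height := by
  induction T with
  | leaf b => simp [numLeaves, leafList, height]
  | node l r ihl ihr =>
    simp only [numLeaves, leafList, List.length_append, height] at *
    have h1 : (2:ℕ) ^ l.height ≤ 2 ^ max l.height r.height :=
      Nat.pow_le_pow_right (by norm_num) (le_max_left _ _)
    have h2 : (2:ℕ) ^ r.height ≤ 2 ^ max l.height r.height :=
      Nat.pow_le_pow_right (by norm_num) (le_max_right _ _)
    have : (2:ℕ) ^ (max l.height r.height + 1) = 2 ^ max l.height r.height + 2 ^ max l.height r.height := by ring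
    omega

theorem Embeds.rfl (T : RTree L) : Embeds T T := by
  induction T with
  | leaf b => exact .leaf b
  | node l r ihl ihr => exact .pair ihl ihr

theorem Embeds.eq_leaf {S : RTree L} {b : L} (e : Embeds S (RTree.leaf b)) : S = RTree.leaf b := by
  cases e; rfl

theorem Embeds.trans {A B C : RTree L} (h1 : Embeds A B) (h2 : Embeds B C) : Embeds A C := by
  induction h2 generalizing A with
  | leaf b => exact h1
  | left _ ih => exact .left (ih h1)
  | right _ ih => exact .right (ih h1)
  | pair e1 e2 ih1 ih2 =>
    cases h1 with
    | left hA => exact .left (ih1 hA)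
    | right hA => exact .right (ih2 hA)
    | pair hA1 hA2 => exact .pair (ih1 hA1) (ih2 hA2)
    | pair_swap hA1 hA2 => exact .pair_swap (ih2 hA1) (ih1 hA2)
  | pair_swap e1 e2 ih1 ih2 =>
    cases h1 with
    | left hA => exact .right (ih1 hA)
    | right hA => exact .left (ih2 hA)
    | pair hA1 hA2 => exact .pair_swap (ih1 hA1) (ih2 hA2)
    | pair_swap hA1 hA2 => exact .pair (ih2 hA1) (ih1 hA2)

theorem exists_balanced_restrict {S : RTree L} (hb : S.IsBalanced) {m : ℕ} (hm : m ≤ S.height) :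
    ∃ S' : RTree L, Embeds S' S ∧ S'.IsBalanced ∧ S'.height = m := by
  induction S with
  | leaf b =>
    have : m = 0 := by simpa [height] using hm
    exact ⟨leaf b, .leaf b, trivial, by simp [height, this]⟩
  | node l r ihl ihr =>
    obtain ⟨bl, br, heq⟩ := hb
    have hh : (node l r).height = l.height + 1 := by simp [height, heq]
    rcases eq_or_lt_of_le hm with h | h
    · exact ⟨node l r, .rfl _, ⟨bl, br, heq⟩, h.symm⟩
    · have : m ≤ l.height := by omega
      obtain ⟨S', e, b', hh'⟩ := ihl bl this
      exact ⟨S', .left e, b', hh'⟩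

theorem exists_leaf (T : RTree L) : ∃ b, Embeds (leaf b) T := by
  induction T with
  | leaf b => exact ⟨b, .leaf b⟩
  | node l r ihl ihr => obtain ⟨b, e⟩ := ihl; exact ⟨b, .left e⟩

def rmap (f : L → L) : RTree L → RTree L
  | leaf b => leaf (f b)
  | node l r => node (rmap f l) (rmap f r)

theorem leafList_rmap (f : L → L) (T : RTree L) : (rmap f T).leafList = T.leafList.map f := by
  induction T with
  | leaf b => simp [rmap, leafList]
  | node l r ihl ihr => simp [rmap, leafList, ihl, ihr]

theorem height_rmap (f : L → L) (T : RTree L) : (rmap f T).height = T.height := by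
  induction T with
  | leaf b => simp [rmap, height]
  | node l r ihl ihr => simp [rmap, height, ihl, ihr]

theorem embeds_rmap_inv {f : L → L} {S T : RTree L} (e : Embeds S (rmap f T)) :
    ∃ S', Embeds S' T ∧ S = rmap f S' := by
  induction T generalizing S with
  | leaf b =>
    simp only [rmap] at e
    exact ⟨leaf b, .leaf b, e.eq_leaf⟩
  | node l r ihl ihr =>
    simp only [rmap] at e
    cases e with
    | left e => obtain ⟨S', h1, h2⟩ := ihl e; exact ⟨S', .left h1, h2⟩
    | right e => obtain ⟨S', h1, h2⟩ := ihr e; exact ⟨S', .right h1, h2⟩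
    | pair e1 e2 =>
      obtain ⟨S1, h1, h1'⟩ := ihl e1; obtain ⟨S2, h2, h2'⟩ := ihr e2
      exact ⟨node S1 S2, .pair h1 h2, by simp [rmap, h1', h2']⟩
    | pair_swap e1 e2 =>
      obtain ⟨S1, h1, h1'⟩ := ihr e1; obtain ⟨S2, h2, h2'⟩ := ihl e2
      exact ⟨node S1 S2, .pair_swap h1 h2, by simp [rmap, h1', h2']⟩

def complete : ℕ → ℕ → RTree ℕ
  | 0, s => leaf s
  | n+1, s => node (complete n s) (complete n (s + 2 ^ n))

theorem leafList_complete (n s : ℕ) : (complete n s).leafList = List.range' s (2 ^ n) := by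
  induction n generalizing s with
  | zero => simp [complete, leafList]
  | succ n ih =>
    simp only [complete, leafList, ih]
    rw [List.range'_append_1]
    ring_nf

theorem height_complete (n s : ℕ) : (complete n s).height = n := by
  induction n generalizing s with
  | zero => simp [complete, height]
  | succ n ih => simp [complete, height, ih]

end RTree

namespace RTree
variable {L : Type}

theorem isBalanced_rmap (f : L → L) (T : RTree L) : (rmap f T).IsBalanced ↔ T.IsBalanced := by
  induction T with
  | leaf b => simp [rmap, IsBalanced]
  | node l r ihl ihr => simp [rmap, IsBalanced, ihl, ihr, height_rmap]

theorem isBalanced_complete (n s : ℕ) : (complete n s).IsBalanced := by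
  induction n generalizing s with
  | zero => trivial
  | succ n ih => exact ⟨ih s, ih _, by rw [height_complete, height_complete]⟩

end RTree

open RTree

def fSet (h k : ℕ) : Set ℕ := {n | ∃ T : RTree ℕ, T.IsPhylo ∧ T.height ≤ h ∧
    (∀ S : RTree ℕ, RTree.Embeds S T → S.IsBalanced → S.height ≤ k) ∧ T.numLeaves = n}

theorem fSet_bddAbove (h k : ℕ) : BddAbove (fSet h k) := by
  refine ⟨2 ^ h, fun n hn => ?_⟩
  obtain ⟨T, _, hh, _, rfl⟩ := hn
  exact (numLeaves_le_two_pow T).trans (Nat.pow_le_pow_right (by norm_num) hh)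

theorem one_mem_fSet (h k : ℕ) : 1 ∈ fSet h k := by
  refine ⟨RTree.leaf 0, by simp [IsPhylo, leafList], by simp [height], ?_, by simp [numLeaves, leafList]⟩
  intro S e _
  rw [e.eq_leaf]
  simp [height]

noncomputable def fExt' (h k : ℕ) : ℕ :=
  sSup {n | ∃ T : RTree ℕ, T.IsPhylo ∧ T.height ≤ h ∧
    (∀ S : RTree ℕ, RTree.Embeds S T → S.IsBalanced → S.height ≤ k) ∧ T.numLeaves = n}

theorem fExt'_eq (h k : ℕ) : fExt' h k = sSup (fSet h k) := rfl

theorem le_fExt' {h k n : ℕ} (hn : n ∈ fSet h k) : n ≤ fExt' h k :=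
  le_csSup (fSet_bddAbove h k) hn

theorem fExt'_le {h k m : ℕ} (hm : ∀ n ∈ fSet h k, n ≤ m) : fExt' h k ≤ m :=
  csSup_le ⟨1, one_mem_fSet h k⟩ hm

theorem fExt'_mem (h k : ℕ) : fExt' h k ∈ fSet h k :=
  Nat.sSup_mem ⟨1, one_mem_fSet h k⟩ (fSet_bddAbove h k)

theorem numLeaves_node (l r : RTree ℕ) : (RTree.node l r).numLeaves = l.numLeaves + r.numLeaves := by
  simp [numLeaves, leafList]

theorem fExt'_diag (k : ℕ) : fExt' k k = 2 ^ k := by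
  apply le_antisymm
  · apply fExt'_le
    rintro n ⟨T, _, hh, _, rfl⟩
    exact (numLeaves_le_two_pow T).trans (Nat.pow_le_pow_right (by norm_num) hh)
  · apply le_fExt'
    refine ⟨complete k 0, ?_, le_of_eq (height_complete k 0), ?_, ?_⟩
    · rw [IsPhylo, leafList_complete]; exact List.nodup_range'
    · intro S e _; exact e.height_le.trans (le_of_eq (height_complete k 0))
    · rw [numLeaves, leafList_complete, List.length_range']

theorem fExt'_zero (h : ℕ) : fExt' h 0 = 1 := by
  apply le_antisymm
  · apply fExt'_le
    rintro n ⟨T, _, _, c, rfl⟩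
    cases T with
    | leaf b => simp [numLeaves, leafList]
    | node l r =>
      obtain ⟨a, ea⟩ := exists_leaf l
      obtain ⟨b, eb⟩ := exists_leaf r
      have := c (RTree.node (RTree.leaf a) (RTree.leaf b)) (.pair ea eb)
        (by simp [IsBalanced, height])
      simp [height] at this
  · exact le_fExt' (one_mem_fSet h 0)

theorem recur_ge (h k : ℕ) (hk : 0 < k) (hkh : k < h) :
    fExt' (h-1) k + fExt' (h-1) (k-1) ≤ fExt' h k := by
  obtain ⟨T₁, p1, h1, c1, n1⟩ := fExt'_mem (h-1) k
  obtain ⟨T₂, p2, h2, c2, n2⟩ := fExt'_mem (h-1) (k-1)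
  apply le_fExt'
  refine ⟨RTree.node (rmap (fun x => 2*x) T₁) (rmap (fun x => 2*x+1) T₂), ?_, ?_, ?_, ?_⟩
  · simp only [IsPhylo, leafList, leafList_rmap]
    rw [List.nodup_append]
    refine ⟨p1.map (fun a b hab => by omega), p2.map (fun a b hab => by omega), ?_⟩
    intro x hx y hx'
    simp only [List.mem_map] at hx hx'
    obtain ⟨a, _, rfl⟩ := hx; obtain ⟨b, _, hb⟩ := hx'; omega
  · simp only [height, height_rmap]; omega
  · intro S e hb
    cases e with
    | left e =>
      obtain ⟨S', e', rfl⟩ := embeds_rmap_inv e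
      rw [height_rmap]
      exact c1 S' e' ((isBalanced_rmap _ _).mp hb)
    | right e =>
      obtain ⟨S', e', rfl⟩ := embeds_rmap_inv e
      rw [height_rmap]
      exact (c2 S' e' ((isBalanced_rmap _ _).mp hb)).trans (by omega)
    | pair e1 e2 =>
      simp only [IsBalanced] at hb
      obtain ⟨hb1, hb2, heq⟩ := hb
      obtain ⟨S', e', rfl⟩ := embeds_rmap_inv e2
      have hle := c2 S' e' ((isBalanced_rmap _ _).mp hb2)
      simp only [height, height_rmap] at heq ⊢
      omega
    | pair_swap e1 e2 =>
      simp only [IsBalanced] at hb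
      obtain ⟨hb1, hb2, heq⟩ := hb
      obtain ⟨S', e', rfl⟩ := embeds_rmap_inv e1
      have hle := c2 S' e' ((isBalanced_rmap _ _).mp hb1)
      simp only [height, height_rmap] at heq ⊢
      omega
  · simp only [numLeaves, leafList, leafList_rmap, List.length_append, List.length_map]
    unfold numLeaves at n1 n2
    omega

theorem recur_le (h k : ℕ) (hk : 0 < k) (hkh : k < h) :
    fExt' h k ≤ fExt' (h-1) k + fExt' (h-1) (k-1) := by
  apply fExt'_le
  rintro n ⟨T, p, hh, c, rfl⟩
  cases T with
  | leaf b =>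
    have : 1 ≤ fExt' (h-1) k := le_fExt' (one_mem_fSet _ _)
    simp only [numLeaves, leafList, List.length_singleton]
    omega
  | node l r =>
    simp only [height] at hh
    have hhl : l.height ≤ h - 1 := by omega
    have hhr : r.height ≤ h - 1 := by omega
    rw [IsPhylo, leafList, List.nodup_append] at p
    have cl : ∀ S, Embeds S l → S.IsBalanced → S.height ≤ k := fun S e hb => c S (.left e) hb
    have cr : ∀ S, Embeds S r → S.IsBalanced → S.height ≤ k := fun S e hb => c S (.right e) hb
    have key : (∀ S, Embeds S l → S.IsBalanced → S.height ≤ k - 1) ∨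
               (∀ S, Embeds S r → S.IsBalanced → S.height ≤ k - 1) := by
      by_contra hcon
      push_neg at hcon
      obtain ⟨⟨S₁, e₁, b₁, hS₁⟩, S₂, e₂, b₂, hS₂⟩ := hcon
      obtain ⟨S₁', e₁', b₁', hh₁⟩ := exists_balanced_restrict b₁ (show k ≤ S₁.height by omega)
      obtain ⟨S₂', e₂', b₂', hh₂⟩ := exists_balanced_restrict b₂ (show k ≤ S₂.height by omega)
      have := c (RTree.node S₁' S₂') (.pair (e₁'.trans e₁) (e₂'.trans e₂))
        (by simp only [IsBalanced]; exact ⟨b₁', b₂', by omega⟩)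
      simp only [height] at this
      omega
    have nrr : r.numLeaves ≤ fExt' (h-1) k := le_fExt' ⟨r, p.2.1, hhr, cr, rfl⟩
    have nll : l.numLeaves ≤ fExt' (h-1) k := le_fExt' ⟨l, p.1, hhl, cl, rfl⟩
    rw [numLeaves_node]
    rcases key with kl | kr
    · have : l.numLeaves ≤ fExt' (h-1) (k-1) := le_fExt' ⟨l, p.1, hhl, kl, rfl⟩
      omega
    · have : r.numLeaves ≤ fExt' (h-1) (k-1) := le_fExt' ⟨r, p.2.1, hhr, kr, rfl⟩
      omega


theorem fExt_eq_fExt' : fExt = fExt' := rfl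

/-- `f(h,k) = 2^k` when `h = k` or `k = 0`, and
`f(h,k) = f(h-1,k) + f(h-1,k-1)` whenever `0 < k < h`. -/
theorem stmt_6 (h k : ℕ) (hkh : k ≤ h) :
    ((h = k ∨ k = 0) → fExt h k = 2 ^ k) ∧
    (0 < k → k < h → fExt h k = fExt (h - 1) k + fExt (h - 1) (k - 1)) := by
  rw [fExt_eq_fExt']
  constructor
  · rintro (rfl | rfl)
    · exact fExt'_diag _
    · simpa using fExt'_zero h
  · intro hk hkh'
    exact le_antisymm (recur_le h k hk hkh') (recur_ge h k hk hkh')
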